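/- Let μ = (1/3)(δ_{-1} + δ_0 + δ_1). There is no stopping time τ with respect to the natural filtration of the simple symmetric random walk such that τ<∞ a.s., X_τ has law μ, and the stopped process (X_{n∧τ})_{n≥0} is a uniformly integrable martingale. In particular, the set M_0^{UI} is a proper subset of the set of all centered probability measures on ℤ. -/

import Mathlib

open MeasureTheory ProbabilityTheory Filter Set
open scoped ENNReal NNReal Topology

noncomputable section

namespace RWSkorokhod

variable {Ω : Type*} [MeasurableSpace Ω]

/-- The simple symmetric random walk `X n = ξ 1 + ⋯ + ξ n` built from the steps `ξ`. -/
def walk (ξ : ℕ → Ω → ℤ) (n : ℕ) (ω : Ω) : ℤ :=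
  ∑ k ∈ Finset.Icc 1 n, ξ k ω

/-- `ξ` is a sequence of i.i.d. symmetric `±1` steps under the probability measure `P`. -/
structure IsSSRW (P : Measure Ω) (ξ : ℕ → Ω → ℤ) : Prop where
  isProb : IsProbabilityMeasure P
  meas : ∀ k, Measurable (ξ k)
  indep : iIndepFun ξ P
  up : ∀ k, P {ω | ξ k ω = 1} = 1 / 2
  down : ∀ k, P {ω | ξ k ω = -1} = 1 / 2

lemma measurable_walk (ξ : ℕ → Ω → ℤ) (hm : ∀ k, Measurable (ξ k)) (n : ℕ) :
    Measurable (walk ξ n) :=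
  Finset.measurable_sum _ fun k _ => hm k

/-- The natural filtration of the random walk: `F n = σ(X 0, …, X n)`. -/
def natFilt (ξ : ℕ → Ω → ℤ) (hm : ∀ k, Measurable (ξ k)) :
    Filtration ℕ ‹MeasurableSpace Ω› where
  seq n := ⨆ k ∈ Set.Iic n, MeasurableSpace.comap (walk ξ k) inferInstance
  mono' i _ hij := biSup_mono fun k (hk : k ∈ Set.Iic i) => le_trans hk hij
  le' _ := iSup₂_le fun k _ => (measurable_walk ξ hm k).comap_le

/-- `τ` is an (extended-natural-number valued) stopping time for the filtration `F`. -/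
def IsStop (F : Filtration ℕ ‹MeasurableSpace Ω›) (τ : Ω → ℕ∞) : Prop :=
  ∀ n : ℕ, MeasurableSet[F n] {ω | τ ω ≤ (n : ℕ∞)}

/-- `τ` is almost surely finite. -/
def AEFinite (P : Measure Ω) (τ : Ω → ℕ∞) : Prop :=
  ∀ᵐ ω ∂P, τ ω < ⊤

/-- The value `X_τ` of the walk at the stopping time `τ` (junk on `{τ = ∞}`). -/
def stopVal (ξ : ℕ → Ω → ℤ) (τ : Ω → ℕ∞) (ω : Ω) : ℤ :=
  walk ξ (τ ω).toNat ω

/-- The stopped process `X_{n ∧ τ}`, viewed as a real-valued process. -/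
def stopProc (ξ : ℕ → Ω → ℤ) (τ : Ω → ℕ∞) (n : ℕ) (ω : Ω) : ℝ :=
  ((walk ξ (min (n : ℕ∞) (τ ω)).toNat ω : ℤ) : ℝ)

/-- `τ` embeds the measure `μ` : the law of `X_τ` under `P` is `μ`. -/
def Embeds (P : Measure Ω) (ξ : ℕ → Ω → ℤ) (τ : Ω → ℕ∞) (μ : Measure ℤ) : Prop :=
  Measure.map (stopVal ξ τ) P = μ

/-- `τ` is a UI stopping time: an a.s. finite stopping time of the natural filtration such
that the stopped process `(X_{n ∧ τ})` is a uniformly integrable martingale. -/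
def IsUIStop (P : Measure Ω) (ξ : ℕ → Ω → ℤ) (hm : ∀ k, Measurable (ξ k))
    (τ : Ω → ℕ∞) : Prop :=
  IsStop (natFilt ξ hm) τ ∧ AEFinite P τ ∧
    Martingale (stopProc ξ τ) (natFilt ξ hm) P ∧
    UniformIntegrable (stopProc ξ τ) 1 P

/-- The set `M₀^UI` of probability measures on `ℤ` which can be embedded in the random
walk by a UI stopping time of its natural filtration. -/
def MUI (P : Measure Ω) (ξ : ℕ → Ω → ℤ) (hm : ∀ k, Measurable (ξ k)) : Set (Measure ℤ) :=
  {μ | ∃ τ : Ω → ℕ∞, IsUIStop P ξ hm τ ∧ Embeds P ξ τ μ}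

/-- A centered probability measure on `ℤ`: finite first moment and mean zero. -/
def Centered (μ : Measure ℤ) : Prop :=
  IsProbabilityMeasure μ ∧ Integrable (fun n : ℤ => (n : ℝ)) μ ∧
    (∫ n : ℤ, (n : ℝ) ∂μ) = 0

/-- `τ` is a minimal stopping time: any stopping time `σ ≤ τ` a.s. with `X_σ ∼ X_τ`
equals `τ` a.s. -/
def Minimal (P : Measure Ω) (ξ : ℕ → Ω → ℤ) (hm : ∀ k, Measurable (ξ k))
    (τ : Ω → ℕ∞) : Prop :=
  ∀ σ : Ω → ℕ∞, IsStop (natFilt ξ hm) σ → (∀ᵐ ω ∂P, σ ω ≤ τ ω) →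
    Measure.map (stopVal ξ σ) P = Measure.map (stopVal ξ τ) P → σ =ᵐ[P] τ

/-- The measure `μ_p = p δ₀ + ((1-p)/2)(δ₋₂ + δ₂)` on `ℤ`. -/
def muP (p : ℝ) : Measure ℤ :=
  ENNReal.ofReal p • Measure.dirac 0 +
    ENNReal.ofReal ((1 - p) / 2) • (Measure.dirac (-2) + Measure.dirac 2)

/-- The set `S` of `p ∈ [0,1]` such that `μ_p` admits a UI embedding. -/
def Sset (P : Measure Ω) (ξ : ℕ → Ω → ℤ) (hm : ∀ k, Measurable (ξ k)) : Set ℝ :=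
  {p | p ∈ Set.Icc (0 : ℝ) 1 ∧ muP p ∈ MUI P ξ hm}

/-- The exit time `H_N = inf {n : X n ∉ [-N, N]}`. -/
def exitTime (ξ : ℕ → Ω → ℤ) (N : ℕ) (ω : Ω) : ℕ∞ :=
  ⨅ (n : ℕ) (_ : walk ξ n ω ∉ Set.Icc (-(N : ℤ)) (N : ℤ)), (n : ℕ∞)


lemma walk_zero (ξ : ℕ → Ω → ℤ) (ω : Ω) : walk ξ 0 ω = 0 := by
  simp [walk]

lemma walk_one (ξ : ℕ → Ω → ℤ) : walk ξ 1 = ξ 1 := by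
  funext ω; simp [walk]

lemma walk_two (ξ : ℕ → Ω → ℤ) (ω : Ω) : walk ξ 2 ω = ξ 1 ω + ξ 2 ω := by
  have : Finset.Icc 1 2 = ({1, 2} : Finset ℕ) := by decide
  simp [walk, this, Finset.sum_pair (by norm_num : (1:ℕ) ≠ 2)]

lemma toNat_meas_aux {τ : Ω → ℕ∞} (h : ∀ n : ℕ, MeasurableSet {ω | τ ω ≤ (n : ℕ∞)}) :
    Measurable τ := by
  apply measurable_to_countable'
  intro x
  match x with
  | ⊤ =>
    have : τ ⁻¹' {⊤} = (⋃ n : ℕ, {ω | τ ω ≤ (n : ℕ∞)})ᶜ := by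
      ext ω
      simp only [mem_preimage, mem_singleton_iff, mem_compl_iff, mem_iUnion, mem_setOf_eq,
        not_exists]
      constructor
      · intro heq n hle; rw [heq] at hle; simp at hle
      · intro h
        by_contra hne
        obtain ⟨m, hm⟩ := WithTop.ne_top_iff_exists.1 hne
        exact h m (by rw [← hm]; exact le_rfl)
    rw [this]; exact (MeasurableSet.iUnion fun n => h n).compl
  | ((0 : ℕ) : ℕ∞) =>
    have : τ ⁻¹' {((0:ℕ) : ℕ∞)} = {ω | τ ω ≤ ((0:ℕ) : ℕ∞)} := by
      ext ω; simp [le_zero_iff]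
    rw [this]; exact h 0
  | ((Nat.succ k : ℕ) : ℕ∞) =>
    have : τ ⁻¹' {((k+1 : ℕ) : ℕ∞)} =
        {ω | τ ω ≤ ((k+1 : ℕ) : ℕ∞)} \ {ω | τ ω ≤ (k : ℕ∞)} := by
      ext ω
      simp only [mem_preimage, mem_singleton_iff, mem_diff, mem_setOf_eq]
      constructor
      · intro heq
        rw [heq]
        refine ⟨le_rfl, ?_⟩
        intro hle
        have := (Nat.cast_le (α := ℕ∞)).1 hle
        omega
      · rintro ⟨h1, h2⟩
        have hlt : (k : ℕ∞) < τ ω := lt_of_not_ge h2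
        have h3 : ((k:ℕ∞) + 1) ≤ τ ω := Order.add_one_le_of_lt hlt
        have : ((k+1 : ℕ) : ℕ∞) ≤ τ ω := by push_cast; exact h3
        exact le_antisymm h1 this
    rw [this]; exact (h (k+1)).diff (h k)

lemma measurable_apply_nat {f : ℕ → Ω → ℤ} (hf : ∀ n, Measurable (f n)) {g : Ω → ℕ}
    (hg : Measurable g) : Measurable fun ω => f (g ω) ω := by
  apply measurable_to_countable'
  intro z
  have : (fun ω => f (g ω) ω) ⁻¹' {z} = ⋃ n, (g ⁻¹' {n}) ∩ (f n ⁻¹' {z}) := by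
    ext ω
    simp only [mem_preimage, mem_singleton_iff, mem_iUnion, mem_inter_iff]
    constructor
    · intro h; exact ⟨g ω, rfl, h⟩
    · rintro ⟨n, rfl, h⟩; exact h
  rw [this]
  exact MeasurableSet.iUnion fun n =>
    (hg (measurableSet_singleton n)).inter (hf n (measurableSet_singleton z))


section Aux

variable {P : Measure Ω} {ξ : ℕ → Ω → ℤ} {τ : Ω → ℕ∞}

/-- `X_τ` as a real-valued random variable. -/
def stopValR (ξ : ℕ → Ω → ℤ) (τ : Ω → ℕ∞) (ω : Ω) : ℝ :=
  ((stopVal ξ τ ω : ℤ) : ℝ)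

lemma measurable_tau (hm : ∀ k, Measurable (ξ k)) (hstop : IsStop (natFilt ξ hm) τ) :
    Measurable τ :=
  toNat_meas_aux fun n => (natFilt ξ hm).le n _ (hstop n)

lemma measurable_stopVal (hm : ∀ k, Measurable (ξ k)) (hτ : Measurable τ) :
    Measurable (stopVal ξ τ) :=
  measurable_apply_nat (measurable_walk ξ hm)
    ((measurable_of_countable ENat.toNat).comp hτ)

lemma stopProc_zero (ξ : ℕ → Ω → ℤ) (τ : Ω → ℕ∞) : stopProc ξ τ 0 = fun _ => (0 : ℝ) := by
  funext ω
  simp only [stopProc, Nat.cast_zero]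
  rw [min_eq_left zero_le]
  simp [walk_zero]

lemma tendsto_stopProc (ξ : ℕ → Ω → ℤ) (hfin : AEFinite P τ) :
    ∀ᵐ ω ∂P, Tendsto (fun n => stopProc ξ τ n ω) atTop (𝓝 (stopValR ξ τ ω)) := by
  filter_upwards [hfin] with ω hω
  obtain ⟨m, hm⟩ := WithTop.ne_top_iff_exists.1 hω.ne
  apply tendsto_atTop_of_eventually_const (i₀ := m)
  intro n hn
  have hmin : min (n : ℕ∞) (τ ω) = τ ω := by
    rw [min_eq_right]; rw [← hm]; exact Nat.cast_le.2 hn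
  simp only [stopProc, stopValR, stopVal, hmin]

/-- The key consequences of `τ` being a UI stopping time. -/
lemma ui_facts (W : IsSSRW P ξ) (h : IsUIStop P ξ W.meas τ) :
    Integrable (stopValR ξ τ) P ∧ (∫ ω, stopValR ξ τ ω ∂P) = 0 ∧
      ∀ n, stopProc ξ τ n =ᵐ[P] P[stopValR ξ τ | (natFilt ξ W.meas) n] := by
  haveI : IsProbabilityMeasure P := W.isProb
  obtain ⟨hstop, hfin, hM, hUIi⟩ := h
  obtain ⟨C, hC⟩ := hUIi.2.2
  set F := natFilt ξ W.meas with hF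
  have hlim := hM.submartingale.ae_tendsto_limitProcess hC
  have heq : stopValR ξ τ =ᵐ[P] F.limitProcess (stopProc ξ τ) P := by
    filter_upwards [tendsto_stopProc ξ hfin, hlim] with ω h1 h2 using tendsto_nhds_unique h1 h2
  have hmem : MemLp (F.limitProcess (stopProc ξ τ) P) 1 P :=
    hM.submartingale.memLp_limitProcess hC
  have hint : Integrable (stopValR ξ τ) P := (hmem.integrable le_rfl).congr heq.symm
  have hcond : ∀ n, stopProc ξ τ n =ᵐ[P] P[stopValR ξ τ | F n] := fun n =>
    (hM.ae_eq_condExp_limitProcess hUIi n).trans (condExp_congr_ae heq.symm)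
  refine ⟨hint, ?_, hcond⟩
  have h0 : ∫ ω, stopProc ξ τ 0 ω ∂P = ∫ ω, (P[stopValR ξ τ | F 0]) ω ∂P :=
    integral_congr_ae (hcond 0)
  rw [stopProc_zero, integral_condExp (F.le 0)] at h0
  simpa using h0.symm

end Aux

/-- The centered measure `μ = (1/3)(δ₋₁ + δ₀ + δ₁)` admits no UI
embedding into the simple symmetric random walk; in particular `M₀^UI` is a proper
subset of the set of centered probability measures on `ℤ`. -/
theorem no_ui_embedding_third_third_third
    {Ω : Type*} [MeasurableSpace Ω] (P : Measure Ω) (ξ : ℕ → Ω → ℤ)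
    (W : IsSSRW P ξ) :
    (¬ ∃ τ : Ω → ℕ∞, IsUIStop P ξ W.meas τ ∧
        Embeds P ξ τ ((1 / 3 : ℝ≥0∞) •
          (Measure.dirac (-1 : ℤ) + Measure.dirac 0 + Measure.dirac 1))) ∧
      MUI P ξ W.meas ⊂ {μ : Measure ℤ | Centered μ} := by
  haveI : IsProbabilityMeasure P := W.isProb
  set μ3 : Measure ℤ := (1 / 3 : ℝ≥0∞) •
    (Measure.dirac (-1 : ℤ) + Measure.dirac 0 + Measure.dirac 1) with hμ3
  have measZ : ∀ s : Set ℤ, MeasurableSet s := fun s => trivial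
  have hμ3supp : μ3 (({-1, 0, 1} : Set ℤ)ᶜ) = 0 := by
    rw [hμ3]
    simp [Measure.smul_apply, Measure.add_apply, Measure.dirac_apply]
  have hμ3zero : μ3 ({0} : Set ℤ) = 1 / 3 := by
    rw [hμ3]
    simp [Measure.smul_apply, Measure.add_apply, Measure.dirac_apply]
  have hμ3one : μ3 ({1} : Set ℤ) = 1 / 3 := by
    rw [hμ3]
    simp [Measure.smul_apply, Measure.add_apply, Measure.dirac_apply]
  have key : ¬ ∃ τ : Ω → ℕ∞, IsUIStop P ξ W.meas τ ∧ Embeds P ξ τ μ3 := by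
    rintro ⟨τ, hUI, hEmb⟩
    have hEmb' : Measure.map (stopVal ξ τ) P = μ3 := hEmb
    obtain ⟨hint, hmean, hcond⟩ := ui_facts W hUI
    have hτm : Measurable τ := measurable_tau W.meas hUI.1
    have hsm : Measurable (stopVal ξ τ) := measurable_stopVal W.meas hτm
    -- the stopped value lies in {-1,0,1} a.s.
    have hsupp : ∀ᵐ ω ∂P, stopVal ξ τ ω ∈ ({-1, 0, 1} : Set ℤ) := by
      rw [ae_iff]
      have h1 : {ω | ¬ stopVal ξ τ ω ∈ ({-1, 0, 1} : Set ℤ)} =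
          stopVal ξ τ ⁻¹' (({-1, 0, 1} : Set ℤ)ᶜ) := rfl
      rw [h1, ← Measure.map_apply hsm (measZ _), hEmb']
      exact hμ3supp
    have hbdd : ∀ᵐ ω ∂P, |stopValR ξ τ ω| ≤ 1 := by
      filter_upwards [hsupp] with ω h
      simp only [mem_insert_iff, mem_singleton_iff] at h
      rcases h with h | h | h <;> simp [stopValR, h]
    -- the stopped process at time 2 is bounded by 1 a.s.
    have hup : P[stopValR ξ τ | (natFilt ξ W.meas) 2] ≤ᵐ[P] fun _ => (1 : ℝ) := by
      have h1 : stopValR ξ τ ≤ᵐ[P] fun _ => (1 : ℝ) := by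
        filter_upwards [hbdd] with ω h using (abs_le.1 h).2
      have h2 := condExp_mono (m := (natFilt ξ W.meas) 2) hint (integrable_const 1) h1
      rwa [condExp_const ((natFilt ξ W.meas).le 2)] at h2
    have hlow : (fun _ : Ω => (-1 : ℝ)) ≤ᵐ[P] P[stopValR ξ τ | (natFilt ξ W.meas) 2] := by
      have h1 : (fun _ : Ω => (-1 : ℝ)) ≤ᵐ[P] stopValR ξ τ := by
        filter_upwards [hbdd] with ω h using (abs_le.1 h).1
      have h2 := condExp_mono (m := (natFilt ξ W.meas) 2) (integrable_const (-1)) hint h1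
      rwa [condExp_const ((natFilt ξ W.meas).le 2)] at h2
    have hproc2 : ∀ᵐ ω ∂P, |stopProc ξ τ 2 ω| ≤ 1 := by
      filter_upwards [hcond 2, hup, hlow] with ω h h2 h3
      rw [h]; exact abs_le.2 ⟨h3, h2⟩
    -- {τ ≤ 1} is σ(ξ 1)-measurable
    have hle1 : (natFilt ξ W.meas) 1 ≤ MeasurableSpace.comap (ξ 1) inferInstance := by
      refine iSup₂_le fun k hk => ?_
      have hk' : k ≤ 1 := hk
      interval_cases k
      · rintro t ⟨s, hs, rfl⟩
        have hw0 : walk ξ 0 = fun _ : Ω => (0 : ℤ) := funext fun ω => walk_zero ξ ω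
        rw [hw0]
        by_cases h0 : (0 : ℤ) ∈ s
        · have hu : (fun _ : Ω => (0 : ℤ)) ⁻¹' s = univ := by ext ω; simp [h0]
          exact ⟨univ, MeasurableSet.univ, by simp [hu]⟩
        · have hu : (fun _ : Ω => (0 : ℤ)) ⁻¹' s = ∅ := by ext ω; simp [h0]
          exact ⟨∅, MeasurableSet.empty, by simp [hu]⟩
      · rw [walk_one]
    obtain ⟨S, -, hS⟩ : ∃ s, MeasurableSet s ∧ ξ 1 ⁻¹' s = {ω | τ ω ≤ ((1 : ℕ) : ℕ∞)} :=
      hle1 _ (hUI.1 1)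
    -- independence of ξ 1 and ξ 2
    have hind : IndepFun (ξ 1) (ξ 2) P := W.indep.indepFun (by norm_num)
    -- the events forcing |X_2| = 2 are null
    have hAz : ∀ z : ℤ, z = 1 ∨ z = -1 → P (ξ 1 ⁻¹' (Sᶜ ∩ {z})) = 0 := by
      intro z hz
      have hsub : ξ 1 ⁻¹' (Sᶜ ∩ {z}) ∩ ξ 2 ⁻¹' {z} ⊆ {ω | ¬ |stopProc ξ τ 2 ω| ≤ 1} := by
        rintro ω ⟨h1, h2⟩
        simp only [mem_preimage, mem_inter_iff, mem_singleton_iff, mem_compl_iff] at h1 h2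
        obtain ⟨hS1, hz1⟩ := h1
        have hτ2 : ¬ τ ω ≤ ((1 : ℕ) : ℕ∞) := by
          intro hc
          exact hS1 (by rw [← mem_preimage, hS]; exact hc)
        have h2le : ((2 : ℕ) : ℕ∞) ≤ τ ω := by
          have h1lt : ((1 : ℕ) : ℕ∞) < τ ω := lt_of_not_ge hτ2
          have := Order.add_one_le_of_lt h1lt
          calc ((2 : ℕ) : ℕ∞) = ((1 : ℕ) : ℕ∞) + 1 := by norm_cast
          _ ≤ τ ω := this
        have hmin : min ((2 : ℕ) : ℕ∞) (τ ω) = ((2 : ℕ) : ℕ∞) := min_eq_left h2le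
        have hsp : stopProc ξ τ 2 ω = ((walk ξ 2 ω : ℤ) : ℝ) := by
          simp only [stopProc, hmin, ENat.toNat_coe]
        rw [mem_setOf_eq, hsp, walk_two, hz1, h2]
        rcases hz with rfl | rfl <;> norm_num
      have hnull : P (ξ 1 ⁻¹' (Sᶜ ∩ {z}) ∩ ξ 2 ⁻¹' {z}) = 0 := by
        refine measure_mono_null hsub ?_
        rw [← ae_iff] at *
        exact hproc2
      rw [hind.measure_inter_preimage_eq_mul _ _ (measZ _) (measZ _)] at hnull
      have h2z : P (ξ 2 ⁻¹' {z}) = 1 / 2 := by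
        rcases hz with rfl | rfl
        · have : ξ 2 ⁻¹' ({1} : Set ℤ) = {ω | ξ 2 ω = 1} := by ext ω; simp
          rw [this]; exact W.up 2
        · have : ξ 2 ⁻¹' ({-1} : Set ℤ) = {ω | ξ 2 ω = -1} := by ext ω; simp
          rw [this]; exact W.down 2
      rw [h2z] at hnull
      rcases mul_eq_zero.1 hnull with h | h
      · exact h
      · exfalso; simp at h
    -- ξ 1 ∈ {-1, 1} a.s.
    have hξ1 : P (ξ 1 ⁻¹' (({-1, 1} : Set ℤ)ᶜ)) = 0 := by
      have hd : Disjoint (ξ 1 ⁻¹' ({-1} : Set ℤ)) (ξ 1 ⁻¹' ({1} : Set ℤ)) := by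
        rw [Set.disjoint_iff]
        rintro ω ⟨ha, hb⟩
        simp only [mem_preimage, mem_singleton_iff] at ha hb
        rw [ha] at hb; norm_num at hb
      have h1 : P (ξ 1 ⁻¹' ({-1, 1} : Set ℤ)) = 1 := by
        have : ({-1, 1} : Set ℤ) = {-1} ∪ {1} := rfl
        rw [this, Set.preimage_union, measure_union hd (W.meas 1 (measZ _))]
        have ha : ξ 1 ⁻¹' ({-1} : Set ℤ) = {ω | ξ 1 ω = -1} := by ext ω; simp
        have hb : ξ 1 ⁻¹' ({1} : Set ℤ) = {ω | ξ 1 ω = 1} := by ext ω; simp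
        rw [ha, hb, W.down 1, W.up 1]
        rw [ENNReal.add_halves]
      have h2 := measure_compl (μ := P) (W.meas 1 (measZ ({-1, 1} : Set ℤ)))
        (measure_ne_top P _)
      rw [h1, measure_univ, ← Set.preimage_compl] at h2
      simpa using h2
    -- hence τ ≤ 1 a.s.
    have hτle1 : ∀ᵐ ω ∂P, τ ω ≤ ((1 : ℕ) : ℕ∞) := by
      have hsub : (ξ 1 ⁻¹' Sᶜ) ⊆ (ξ 1 ⁻¹' (Sᶜ ∩ {1})) ∪ (ξ 1 ⁻¹' (Sᶜ ∩ {-1})) ∪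
          (ξ 1 ⁻¹' (({-1, 1} : Set ℤ)ᶜ)) := by
        intro ω h
        simp only [mem_preimage, mem_compl_iff] at h
        by_cases h1 : ξ 1 ω = 1
        · left; left; exact ⟨h, h1⟩
        · by_cases h2 : ξ 1 ω = -1
          · left; right; exact ⟨h, h2⟩
          · right; simp [h1, h2]
      have h0 : P (ξ 1 ⁻¹' Sᶜ) = 0 := by
        refine le_antisymm ?_ zero_le
        calc P (ξ 1 ⁻¹' Sᶜ) ≤ P ((ξ 1 ⁻¹' (Sᶜ ∩ {1})) ∪ (ξ 1 ⁻¹' (Sᶜ ∩ {-1})) ∪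
            (ξ 1 ⁻¹' (({-1, 1} : Set ℤ)ᶜ))) := measure_mono hsub
        _ ≤ P (ξ 1 ⁻¹' (Sᶜ ∩ {1})) + P (ξ 1 ⁻¹' (Sᶜ ∩ {-1})) +
            P (ξ 1 ⁻¹' (({-1, 1} : Set ℤ)ᶜ)) :=
          le_trans (measure_union_le _ _) (add_le_add_left (measure_union_le _ _) _)
        _ = 0 := by rw [hAz 1 (Or.inl rfl), hAz (-1) (Or.inr rfl), hξ1]; simp
      rw [ae_iff]
      have : {ω | ¬ τ ω ≤ ((1 : ℕ) : ℕ∞)} = ξ 1 ⁻¹' Sᶜ := by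
        rw [Set.preimage_compl, hS]; rfl
      rw [this]; exact h0
    -- F 0 is trivial : {τ ≤ 0} is either empty or everything
    have h0mem : MeasurableSet[MeasurableSpace.comap (walk ξ 0) inferInstance]
        {ω | τ ω ≤ ((0 : ℕ) : ℕ∞)} := by
      have hle : (natFilt ξ W.meas) 0 ≤ MeasurableSpace.comap (walk ξ 0) inferInstance := by
        refine iSup₂_le fun k hk => ?_
        have hk' : k ≤ 0 := hk
        interval_cases k
        exact le_rfl
      exact hle _ (hUI.1 0)
    obtain ⟨T, -, hT⟩ : ∃ s, MeasurableSet s ∧ walk ξ 0 ⁻¹' s = {ω | τ ω ≤ ((0 : ℕ) : ℕ∞)} :=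
      h0mem
    have hw0 : walk ξ 0 = fun _ : Ω => (0 : ℤ) := funext fun ω => walk_zero ξ ω
    rw [hw0] at hT
    by_cases h0T : (0 : ℤ) ∈ T
    · -- τ = 0 everywhere, so the law is δ₀ : contradiction with μ3 {1} = 1/3
      have hτ0 : ∀ ω, τ ω = 0 := by
        intro ω
        have : ω ∈ (fun _ : Ω => (0 : ℤ)) ⁻¹' T := by simp [h0T]
        rw [hT] at this
        simpa using this
      have hsv : stopVal ξ τ = fun _ => (0 : ℤ) := by
        funext ω; simp [stopVal, hτ0 ω, walk_zero]
      have hc : μ3 ({1} : Set ℤ) = 0 := by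
        rw [← hEmb', Measure.map_apply hsm (measZ _), hsv]
        have : (fun _ : Ω => (0 : ℤ)) ⁻¹' ({1} : Set ℤ) = ∅ := by ext ω; simp
        rw [this]; exact measure_empty
      rw [hμ3one] at hc
      simp [ENNReal.div_eq_zero_iff] at hc
    · -- τ = 1 a.s., so the law is that of ξ 1 : contradiction with μ3 {0} = 1/3
      have hτ1 : ∀ᵐ ω ∂P, τ ω = 1 := by
        filter_upwards [hτle1] with ω h
        have h0 : ¬ τ ω ≤ ((0 : ℕ) : ℕ∞) := by
          intro hc
          have : ω ∈ (fun _ : Ω => (0 : ℤ)) ⁻¹' T := by rw [hT]; exact hc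
          simp only [mem_preimage] at this
          exact h0T this
        have hpos : (0 : ℕ∞) < τ ω := by
          rw [Nat.cast_zero] at h0
          exact lt_of_not_ge h0
        have h1le : (1 : ℕ∞) ≤ τ ω := by
          have := Order.add_one_le_of_lt hpos
          simpa using this
        have : τ ω ≤ (1 : ℕ∞) := by rw [Nat.cast_one] at h; exact h
        exact le_antisymm this h1le
      have hsv : stopVal ξ τ =ᵐ[P] ξ 1 := by
        filter_upwards [hτ1] with ω h
        have : stopVal ξ τ ω = walk ξ 1 ω := by simp [stopVal, h]
        rw [this, walk_one]
      have hc : μ3 ({0} : Set ℤ) = 0 := by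
        rw [← hEmb', Measure.map_congr hsv, Measure.map_apply (W.meas 1) (measZ _)]
        refine le_antisymm (le_trans (measure_mono ?_) hξ1.le) zero_le
        intro ω h
        simp only [mem_preimage, mem_singleton_iff] at h
        simp [h]
      rw [hμ3zero] at hc
      simp [ENNReal.div_eq_zero_iff] at hc
  refine ⟨key, ?_⟩
  have hsub : MUI P ξ W.meas ⊆ {μ : Measure ℤ | Centered μ} := by
    rintro μ ⟨τ, hUI, hEmb⟩
    have hEmb' : Measure.map (stopVal ξ τ) P = μ := hEmb
    obtain ⟨hint, hmean, -⟩ := ui_facts W hUI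
    have hsm : Measurable (stopVal ξ τ) :=
      measurable_stopVal W.meas (measurable_tau W.meas hUI.1)
    have hgm : Measurable fun n : ℤ => (n : ℝ) := measurable_of_countable _
    refine ⟨?_, ?_, ?_⟩
    · rw [← hEmb']; exact Measure.isProbabilityMeasure_map hsm.aemeasurable
    · rw [← hEmb', integrable_map_measure hgm.aestronglyMeasurable.aemeasurable.aestronglyMeasurable
        hsm.aemeasurable]
      exact hint
    · rw [← hEmb', integral_map hsm.aemeasurable
        hgm.aestronglyMeasurable.aemeasurable.aestronglyMeasurable]
      exact hmean
  rw [Set.ssubset_iff_of_subset hsub]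
  refine ⟨μ3, ?_, fun hmem => key hmem⟩
  have hd : ∀ a : ℤ, Integrable (fun n : ℤ => (n : ℝ)) (Measure.dirac a) := fun a =>
    (integrable_const ((a : ℤ) : ℝ)).congr (ae_eq_dirac fun n : ℤ => (n : ℝ)).symm
  have h13 : (1 / 3 : ℝ≥0∞) ≠ ⊤ := by simp
  refine ⟨⟨?_⟩, ?_, ?_⟩
  · rw [hμ3]
    simp only [Measure.smul_apply, Measure.add_apply, measure_univ, smul_eq_mul]
    norm_num
    exact ENNReal.inv_mul_cancel (by norm_num) (by norm_num)
  · rw [hμ3]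
    exact (((hd (-1)).add_measure (hd 0)).add_measure (hd 1)).smul_measure h13
  · rw [hμ3]
    rw [integral_smul_measure, integral_add_measure ((hd (-1)).add_measure (hd 0)) (hd 1),
      integral_add_measure (hd (-1)) (hd 0), integral_dirac, integral_dirac, integral_dirac]
    norm_num

end RWSkorokhod
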